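/- arXiv:2005.10116 — 8 statements merged into one kernel-verified Lean document; each statement's English description precedes it below -/
import Mathlib

section
/- Let d ≥ 2 and let κ_{d-1} denote the Lebesgue volume of the closed unit ball in ℝ^{d-1}. Then for every point x in the closed unit ball of ℝ^d, the Lebesgue volume of the set difference B(0,1) \ B(x,1) of closed unit balls satisfies vol_d(B(0,1) \ B(x,1)) ≥ (2 κ_{d-1}/(d+1)) · ‖x‖^{(d+1)/2}. -/
open MeasureTheory Metric

/-- The Lebesgue volume of the closed unit ball in `ℝ^m`. -/
noncomputable def unitBallVol (m : ℕ) : ℝ :=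
  (volume (closedBall (0 : EuclideanSpace ℝ (Fin m)) 1)).toReal

lemma vol_sq_sum (n : ℕ) {c : ℝ} (hc : 0 ≤ c) :
    volume {z : Fin n → ℝ | ∑ i, z i ^ 2 ≤ c} =
      ENNReal.ofReal (c ^ ((n : ℝ) / 2)) *
        volume (closedBall (0 : EuclideanSpace ℝ (Fin n)) 1) := by
  have hmeas : MeasurableSet {z : Fin n → ℝ | ∑ i, z i ^ 2 ≤ c} := by
    apply measurableSet_le _ measurable_const
    exact Finset.measurable_sum _ fun i _ => (measurable_pi_apply i).pow_const 2
  have h1 := (EuclideanSpace.volume_preserving_symm_measurableEquiv_toLp (Fin n)).measure_preimage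
    hmeas.nullMeasurableSet
  have h2 : (MeasurableEquiv.toLp 2 (Fin n → ℝ)).symm ⁻¹' {z : Fin n → ℝ | ∑ i, z i ^ 2 ≤ c} =
      closedBall (0 : EuclideanSpace ℝ (Fin n)) (Real.sqrt c) := by
    ext w
    simp only [Set.mem_preimage, Set.mem_setOf_eq, mem_closedBall, dist_zero_right,
      MeasurableEquiv.coe_toLp_symm]
    rw [EuclideanSpace.norm_eq]
    have : ∀ i, ‖w i‖ ^ 2 = w i ^ 2 := fun i => by
      rw [Real.norm_eq_abs, sq_abs]
    simp_rw [this]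
    exact (Real.sqrt_le_sqrt_iff hc).symm
  rw [← h1, h2, Measure.addHaar_closedBall' _ _ (Real.sqrt_nonneg c)]
  congr 2
  rw [finrank_euclideanSpace_fin, Real.sqrt_eq_rpow, ← Real.rpow_natCast (c ^ ((1:ℝ)/2)) n,
    ← Real.rpow_mul hc]
  ring_nf

/-- Lemma 4.1: for `x` in the closed unit ball of `ℝ^d`,
`vol (B(0,1) \ B(x,1)) ≥ (2 κ_{d-1}/(d+1)) ‖x‖^{(d+1)/2}`. -/
theorem stmt_0 (d : ℕ) (hd : 2 ≤ d) (x : EuclideanSpace ℝ (Fin d))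
    (hx : x ∈ closedBall (0 : EuclideanSpace ℝ (Fin d)) 1) :
    2 * unitBallVol (d - 1) / (d + 1) * ‖x‖ ^ ((d + 1 : ℝ) / 2) ≤
      (volume (closedBall (0 : EuclideanSpace ℝ (Fin d)) 1 \ closedBall x 1)).toReal := by
  obtain ⟨n, rfl⟩ : ∃ n, d = n + 1 := ⟨d - 1, by omega⟩
  set r := ‖x‖ with hrdef
  have hr0 : 0 ≤ r := norm_nonneg x
  have hr1 : r ≤ 1 := by simpa [mem_closedBall_zero_iff] using hx
  set p : ℝ := (n : ℝ) / 2 with hpdef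
  have hp0 : (0:ℝ) ≤ p := by positivity
  set V : ENNReal := volume (closedBall (0 : EuclideanSpace ℝ (Fin n)) 1) with hVdef
  -- reduce to the case where the center is `r • single 0 1`
  set e : EuclideanSpace ℝ (Fin (n+1)) := r • EuclideanSpace.single 0 1 with hedef
  have he : ‖e‖ = r := by
    rw [hedef, norm_smul, EuclideanSpace.norm_single]
    simp [abs_of_nonneg hr0]
  have hxe : ‖x‖ = ‖e‖ := by rw [he]
  set f := Submodule.reflection (ℝ ∙ (x - e))ᗮ with hfdef
  have hfx : f x = e := Submodule.reflection_sub hxe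
  have hvol : volume (closedBall (0 : EuclideanSpace ℝ (Fin (n+1))) 1 \ closedBall x 1) =
      volume (closedBall (0 : EuclideanSpace ℝ (Fin (n+1))) 1 \ closedBall e 1) := by
    have hmp := f.measurePreserving
    have hb1 : ⇑f ⁻¹' closedBall (0 : EuclideanSpace ℝ (Fin (n+1))) 1 =
        closedBall (0 : EuclideanSpace ℝ (Fin (n+1))) 1 := by
      ext y
      simp [mem_closedBall_zero_iff, f.norm_map]
    have hb2 : ⇑f ⁻¹' closedBall e 1 = closedBall x 1 := by
      ext y
      simp only [Set.mem_preimage, mem_closedBall, dist_eq_norm, ← hfx, ← map_sub,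
        f.norm_map]
    have hpre : ⇑f ⁻¹' (closedBall (0 : EuclideanSpace ℝ (Fin (n+1))) 1 \ closedBall e 1) =
        closedBall (0 : EuclideanSpace ℝ (Fin (n+1))) 1 \ closedBall x 1 := by
      rw [Set.preimage_diff, hb1, hb2]
    rw [← hpre, hmp.measure_preimage
      ((measurableSet_closedBall.diff measurableSet_closedBall).nullMeasurableSet)]
  -- the comparison set in `ℝ × ℝ^n`
  set T : Set (ℝ × (Fin n → ℝ)) :=
    (Prod.fst ⁻¹' Set.Ico (-1 : ℝ) (r - 1)) ∩ {q | ∑ i, q.2 i ^ 2 ≤ q.1 + 1} with hTdef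
  have hTmeas : MeasurableSet T := by
    apply MeasurableSet.inter
    · exact measurable_fst measurableSet_Ico
    · apply measurableSet_le _ (measurable_fst.add_const 1)
      exact Finset.measurable_sum _ fun i _ =>
        ((measurable_pi_apply i).comp measurable_snd).pow_const 2
  -- the measure preserving map from Euclidean space to the product
  have hg1 := EuclideanSpace.volume_preserving_symm_measurableEquiv_toLp (Fin (n+1))
  have hg2 := volume_preserving_piFinSuccAbove (fun _ : Fin (n+1) => ℝ) 0
  have hG := hg2.comp hg1
  -- the preimage of T is inside the difference of the balls
  have hsub : (⇑(MeasurableEquiv.piFinSuccAbove (fun _ : Fin (n+1) => ℝ) 0) ∘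
      ⇑(MeasurableEquiv.toLp 2 (Fin (n+1) → ℝ)).symm) ⁻¹' T ⊆
      closedBall (0 : EuclideanSpace ℝ (Fin (n+1))) 1 \ closedBall e 1 := by
    intro y hy
    simp only [hTdef, Set.mem_preimage, Function.comp_apply, Set.mem_inter_iff,
      Set.mem_setOf_eq, Set.mem_Ico, MeasurableEquiv.piFinSuccAbove_apply,
      MeasurableEquiv.coe_toLp_symm, Fin.insertNthEquiv_zero,
      Fin.consEquiv_symm_apply, Fin.tail_def] at hy
    obtain ⟨⟨h1, h2⟩, h3⟩ := hy
    try simp only [Fin.zero_succAbove, Fin.succAbove_zero] at h3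
    have hsum : ∑ i : Fin (n+1), ‖y i‖ ^ 2 = y 0 ^ 2 + ∑ i : Fin n, y i.succ ^ 2 := by
      simp_rw [Real.norm_eq_abs, sq_abs]
      exact Fin.sum_univ_succ _
    constructor
    · rw [mem_closedBall_zero_iff, EuclideanSpace.norm_eq]
      have hle : ∑ i, ‖y i‖ ^ 2 ≤ 1 := by
        rw [hsum]; nlinarith
      calc Real.sqrt (∑ i, ‖y i‖ ^ 2) ≤ Real.sqrt 1 := Real.sqrt_le_sqrt hle
        _ = 1 := Real.sqrt_one
    · intro hmem
      rw [mem_closedBall, dist_eq_norm] at hmem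
      have hco : (y - e) 0 = y 0 - r := by
        simp [hedef, PiLp.sub_apply, PiLp.smul_apply, EuclideanSpace.single_apply]
      have hcoord : (y 0 - r) ^ 2 ≤ ∑ i, ‖(y - e) i‖ ^ 2 := by
        have h0 : ‖(y - e) 0‖ ^ 2 = (y 0 - r) ^ 2 := by
          rw [hco, Real.norm_eq_abs, sq_abs]
        rw [← h0]
        exact Finset.single_le_sum (f := fun i => ‖(y - e) i‖ ^ 2)
          (fun i _ => by positivity) (Finset.mem_univ 0)
      have hbig : |y 0 - r| ≤ ‖y - e‖ := by
        rw [EuclideanSpace.norm_eq, ← Real.sqrt_sq_eq_abs]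
        exact Real.sqrt_le_sqrt hcoord
      have habs : |y 0 - r| = r - y 0 := by
        rw [abs_sub_comm, abs_of_pos (by linarith)]
      nlinarith
  -- compute the volume of T
  have hslice : ∀ t : ℝ, volume (Prod.mk t ⁻¹' T) =
      Set.indicator (Set.Ico (-1 : ℝ) (r - 1))
        (fun t => ENNReal.ofReal ((t + 1) ^ p) * V) t := by
    intro t
    by_cases ht : t ∈ Set.Ico (-1 : ℝ) (r - 1)
    · rw [Set.indicator_of_mem ht]
      have : Prod.mk t ⁻¹' T = {z : Fin n → ℝ | ∑ i, z i ^ 2 ≤ t + 1} := by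
        ext z
        simp [hTdef, ht]
      rw [this, vol_sq_sum n (by linarith [ht.1])]
    · rw [Set.indicator_of_notMem ht]
      have : Prod.mk t ⁻¹' T = ∅ := by
        ext z
        simp [hTdef, ht]
      rw [this, measure_empty]
  -- integrability of the slice function
  have hle' : (-1 : ℝ) ≤ r - 1 := by linarith
  have hII : IntervalIntegrable (fun t : ℝ => (t + 1) ^ p) volume (-1) (r - 1) := by
    have h := (intervalIntegral.intervalIntegrable_rpow' (a := 0) (b := r)
      (r := p) (by linarith)).comp_add_right 1
    simpa using h
  have hInt : IntegrableOn (fun t : ℝ => (t + 1) ^ p) (Set.Ico (-1) (r - 1)) volume := by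
    have h := (intervalIntegrable_iff_integrableOn_Ioc_of_le hle').mp hII
    exact h.congr_set_ae Ico_ae_eq_Ioc
  -- value of the real integral
  have hreal : ∫ t in Set.Ico (-1 : ℝ) (r - 1), (t + 1) ^ p = r ^ (p + 1) / (p + 1) := by
    rw [MeasureTheory.integral_Ico_eq_integral_Ioo,
      ← MeasureTheory.integral_Ioc_eq_integral_Ioo,
      ← intervalIntegral.integral_of_le hle']
    have hshift := intervalIntegral.integral_comp_add_right (a := (-1 : ℝ)) (b := r - 1)
      (fun s : ℝ => s ^ p) 1
    rw [hshift]
    norm_num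
    rw [integral_rpow (Or.inl (by linarith : (-1:ℝ) < p))]
    rw [Real.zero_rpow (by positivity : p + 1 ≠ 0)]
    ring
  -- the key lower bound
  have key : ENNReal.ofReal (r ^ (p + 1) / (p + 1)) * V ≤
      volume (closedBall (0 : EuclideanSpace ℝ (Fin (n+1))) 1 \ closedBall e 1) := by
    calc ENNReal.ofReal (r ^ (p + 1) / (p + 1)) * V
        = ENNReal.ofReal (∫ t in Set.Ico (-1 : ℝ) (r - 1), (t + 1) ^ p) * V := by rw [hreal]
      _ = (∫⁻ t in Set.Ico (-1 : ℝ) (r - 1), ENNReal.ofReal ((t + 1) ^ p)) * V := by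
          rw [ofReal_integral_eq_lintegral_ofReal hInt
            ((ae_restrict_iff' measurableSet_Ico).2 (Filter.Eventually.of_forall
              fun t ht => Real.rpow_nonneg (by linarith [ht.1]) p))]
      _ = ∫⁻ t in Set.Ico (-1 : ℝ) (r - 1), ENNReal.ofReal ((t + 1) ^ p) * V := by
          rw [lintegral_mul_const]
          exact (((Real.continuous_rpow_const hp0).comp
            (continuous_id.add continuous_const)).measurable).ennreal_ofReal
      _ = ∫⁻ t, Set.indicator (Set.Ico (-1 : ℝ) (r - 1))
            (fun t => ENNReal.ofReal ((t + 1) ^ p) * V) t := by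
          rw [← lintegral_indicator measurableSet_Ico]
      _ = ∫⁻ t, volume (Prod.mk t ⁻¹' T) := by
          exact (lintegral_congr fun t => (hslice t)).symm
      _ = (volume.prod volume) T := (Measure.prod_apply hTmeas).symm
      _ = volume ((⇑(MeasurableEquiv.piFinSuccAbove (fun _ : Fin (n+1) => ℝ) 0) ∘
            ⇑(MeasurableEquiv.toLp 2 (Fin (n+1) → ℝ)).symm) ⁻¹' T) := by
          rw [hG.measure_preimage hTmeas.nullMeasurableSet, Measure.volume_eq_prod]
      _ ≤ volume (closedBall (0 : EuclideanSpace ℝ (Fin (n+1))) 1 \ closedBall e 1) :=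
          measure_mono hsub
  rw [← hvol] at key
  have hfin : volume (closedBall (0 : EuclideanSpace ℝ (Fin (n+1))) 1 \ closedBall x 1) ≠ ⊤ :=
    (lt_of_le_of_lt (measure_mono Set.diff_subset) measure_closedBall_lt_top).ne
  have hmain := ENNReal.toReal_mono hfin key
  rw [ENNReal.toReal_mul, ENNReal.toReal_ofReal (by positivity)] at hmain
  refine le_trans (le_of_eq ?_) hmain
  have hd1 : n + 1 - 1 = n := by omega
  have hexp : ((n + 1 : ℕ) + 1 : ℝ) / 2 = p + 1 := by
    rw [hpdef]; push_cast; ring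
  rw [hd1, hexp]
  have hV : unitBallVol n = V.toReal := rfl
  rw [hV]
  have hne : ((n + 1 : ℕ) + 1 : ℝ) ≠ 0 := by positivity
  have hpne : p + 1 ≠ 0 := by positivity
  field_simp
  rw [hpdef]
  push_cast
  ring
end

section
/- Let d ≥ 2, let u be a unit vector in ℝ^d and let ε ∈ [0,1]. Then the Lebesgue volume of the spherical cap {w ∈ ℝ^d : ‖w‖ ≤ 1 and ⟨w,u⟩ ≥ 1−ε} equals κ_{d-1} · ∫_{1−ε}^{1} (1−r²)^{(d−1)/2} dr, and this quantity is at least (2 κ_{d-1}/(d+1)) · ε^{(d+1)/2}. -/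
open MeasureTheory Metric RealInnerProductSpace

private lemma slice_vol (m : ℕ) (c : ℝ) (hc : 0 ≤ c) :
    volume {y : Fin m → ℝ | ∑ i, y i ^ 2 ≤ c}
      = ENNReal.ofReal (c ^ ((m : ℝ) / 2)) *
        volume (closedBall (0 : EuclideanSpace ℝ (Fin m)) 1) := by
  have hset : {y : Fin m → ℝ | ∑ i, y i ^ 2 ≤ c}
      = ((MeasurableEquiv.toLp 2 (Fin m → ℝ)).symm).symm ⁻¹'
        (closedBall (0 : EuclideanSpace ℝ (Fin m)) (Real.sqrt c)) := by
    ext y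
    simp only [Set.mem_setOf_eq, Set.mem_preimage, mem_closedBall, dist_zero_right,
      EuclideanSpace.norm_eq, Real.norm_eq_abs, sq_abs]
    have h0 : (0:ℝ) ≤ ∑ i, y i ^ 2 := by positivity
    change ∑ i, y i ^ 2 ≤ c ↔ Real.sqrt (∑ i, y i ^ 2) ≤ Real.sqrt c
    rw [Real.sqrt_le_sqrt_iff hc]
  rw [hset,
    MeasurePreserving.measure_preimage
      (MeasurePreserving.symm _ (EuclideanSpace.volume_preserving_symm_measurableEquiv_toLp (Fin m)))
      measurableSet_closedBall.nullMeasurableSet,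
    Measure.addHaar_closedBall' _ _ (Real.sqrt_nonneg c)]
  congr 2
  rw [finrank_euclideanSpace_fin, ← Real.rpow_natCast (Real.sqrt c) m,
    Real.sqrt_eq_rpow, ← Real.rpow_mul hc]
  ring_nf

private lemma int_lower (p ε : ℝ) (hp : 0 < p) (hε0 : 0 ≤ ε) (hε1 : ε ≤ 1) :
    ε ^ (p + 1) / (p + 1) ≤ ∫ r in (1 - ε)..1, (1 - r ^ 2) ^ p := by
  have hc1 : Continuous fun r : ℝ => (1 - r) ^ p := by
    apply Continuous.rpow_const (by continuity); intro x; right; exact hp.le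
  have hc2 : Continuous fun r : ℝ => (1 - r ^ 2) ^ p := by
    apply Continuous.rpow_const (by continuity); intro x; right; exact hp.le
  have key : ∫ r in (1 - ε)..1, (1 - r) ^ p = ε ^ (p + 1) / (p + 1) := by
    have := intervalIntegral.integral_comp_sub_left (a := 1 - ε) (b := 1)
      (fun s : ℝ => s ^ p) 1
    rw [this]
    simp only [sub_self, sub_sub_cancel]
    rw [integral_rpow (Or.inl (by linarith))]
    rw [Real.zero_rpow (by linarith), sub_zero]
  rw [← key]
  apply intervalIntegral.integral_mono_on (by linarith)
    (hc1.intervalIntegrable _ _) (hc2.intervalIntegrable _ _)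
  intro x hx
  obtain ⟨hx1, hx2⟩ := hx
  have hx0 : 0 ≤ x := by linarith
  apply Real.rpow_le_rpow (by linarith) (by nlinarith) hp.le

private lemma cap_vol (m : ℕ) (u : EuclideanSpace ℝ (Fin (m + 1))) (hu : ‖u‖ = 1)
    (ε : ℝ) (hε0 : 0 ≤ ε) (hε1 : ε ≤ 1) :
    volume {w : EuclideanSpace ℝ (Fin (m + 1)) | ‖w‖ ≤ 1 ∧ 1 - ε ≤ ⟪w, u⟫}
      = ENNReal.ofReal (∫ r in (1 - ε)..1, (1 - r ^ 2) ^ ((m : ℝ) / 2)) *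
        volume (closedBall (0 : EuclideanSpace ℝ (Fin m)) 1) := by
  classical
  have hcard : Module.finrank ℝ (EuclideanSpace ℝ (Fin (m + 1))) = Fintype.card (Fin (m + 1)) := by
    simp [finrank_euclideanSpace_fin]
  have horth : Orthonormal ℝ (Set.restrict ({0} : Set (Fin (m + 1))) (fun _ => u)) := by
    constructor
    · intro i; exact hu
    · intro i j hij
      exact absurd (Subtype.ext (i.2.trans j.2.symm)) hij
  obtain ⟨b, hb⟩ := horth.exists_orthonormalBasis_extension_of_card_eq hcard
  have hb0 : b 0 = u := hb 0 rfl
  set T : Set (EuclideanSpace ℝ (Fin (m + 1))) := {x | ‖x‖ ≤ 1 ∧ 1 - ε ≤ x 0} with hT_def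
  have hTmeas : MeasurableSet T := by
    apply MeasurableSet.inter
    · exact (isClosed_le continuous_norm continuous_const).measurableSet
    · exact (isClosed_le continuous_const
        (EuclideanSpace.proj (0 : Fin (m+1))).continuous).measurableSet
  have hS : {w : EuclideanSpace ℝ (Fin (m + 1)) | ‖w‖ ≤ 1 ∧ 1 - ε ≤ ⟪w, u⟫}
      = ⇑b.repr ⁻¹' T := by
    ext w
    simp only [Set.mem_setOf_eq, Set.mem_preimage, hT_def, b.repr.norm_map]
    have : b.repr w 0 = ⟪w, u⟫ := by
      rw [b.repr_apply_apply, hb0, real_inner_comm]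
    rw [this]
  rw [hS, b.measurePreserving_repr.measure_preimage hTmeas.nullMeasurableSet]
  set T' : Set (Fin (m + 1) → ℝ) := {x | ∑ i, x i ^ 2 ≤ 1 ∧ 1 - ε ≤ x 0} with hT'_def
  have hT'meas : MeasurableSet T' := by
    apply MeasurableSet.inter
    · exact (isClosed_le (continuous_finset_sum _ fun i _ => (continuous_apply i).pow 2)
        continuous_const).measurableSet
    · exact (isClosed_le continuous_const (continuous_apply 0)).measurableSet
  have hTT' : T = ⇑((MeasurableEquiv.toLp 2 (Fin (m + 1) → ℝ)).symm) ⁻¹' T' := by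
    ext x
    simp only [Set.mem_setOf_eq, Set.mem_preimage, hT_def, hT'_def, EuclideanSpace.norm_eq,
      Real.norm_eq_abs, sq_abs]
    have h0 : (0:ℝ) ≤ ∑ i, x i ^ 2 := by positivity
    constructor
    · rintro ⟨h1, h2⟩
      refine ⟨?_, h2⟩
      have : Real.sqrt (∑ i, x i ^ 2) ≤ Real.sqrt 1 := by
        rw [Real.sqrt_one]; exact h1
      calc ∑ i, x i ^ 2 = Real.sqrt (∑ i, x i ^ 2) ^ 2 := (Real.sq_sqrt h0).symm
        _ ≤ 1 := by nlinarith [Real.sqrt_nonneg (∑ i, x i ^ 2)]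
    · rintro ⟨h1, h2⟩
      refine ⟨?_, h2⟩
      calc Real.sqrt (∑ i, x i ^ 2) ≤ Real.sqrt 1 := Real.sqrt_le_sqrt h1
        _ = 1 := Real.sqrt_one
  rw [hTT',
    (EuclideanSpace.volume_preserving_symm_measurableEquiv_toLp (Fin (m + 1))).measure_preimage
      hT'meas.nullMeasurableSet]
  set U : Set (ℝ × (Fin m → ℝ)) :=
    {p | p.1 ^ 2 + ∑ i, p.2 i ^ 2 ≤ 1 ∧ 1 - ε ≤ p.1} with hU_def
  have hUmeas : MeasurableSet U := by
    apply MeasurableSet.inter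
    · exact (isClosed_le ((continuous_fst.pow 2).add
        (continuous_finset_sum _ fun i _ => ((continuous_apply i).comp continuous_snd).pow 2))
        continuous_const).measurableSet
    · exact (isClosed_le continuous_const continuous_fst).measurableSet
  have hT'U : T' = ⇑(MeasurableEquiv.piFinSuccAbove (fun _ : Fin (m + 1) => ℝ) 0) ⁻¹' U := by
    ext x
    simp only [Set.mem_setOf_eq, Set.mem_preimage, hT'_def, hU_def,
      MeasurableEquiv.piFinSuccAbove_apply, Fin.insertNthEquiv_symm_apply, Fin.removeNth,
      Fin.zero_succAbove]
    rw [Fin.sum_univ_succ]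
  rw [hT'U,
    (volume_preserving_piFinSuccAbove (fun _ : Fin (m + 1) => ℝ) 0).measure_preimage
      hUmeas.nullMeasurableSet]
  set V := volume (closedBall (0 : EuclideanSpace ℝ (Fin m)) 1) with hV_def
  set g : ℝ → ℝ := fun x => (1 - x ^ 2) ^ ((m : ℝ) / 2) with hg_def
  have hgc : Continuous g := by
    apply Continuous.rpow_const (continuous_const.sub (continuous_pow 2))
    intro x; right; positivity
  rw [Measure.volume_eq_prod, Measure.prod_apply hUmeas]
  have hslice : ∀ x : ℝ, volume (Prod.mk x ⁻¹' U)
      = Set.indicator (Set.Icc (1 - ε) 1) (fun x => ENNReal.ofReal (g x) * V) x := by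
    intro x
    by_cases h1 : 1 - ε ≤ x
    · by_cases h2 : x ≤ 1
      · have hmem : x ∈ Set.Icc (1 - ε) 1 := ⟨h1, h2⟩
        rw [Set.indicator_of_mem hmem]
        have hx0 : 0 ≤ x := by linarith
        have hpre : Prod.mk x ⁻¹' U = {y : Fin m → ℝ | ∑ i, y i ^ 2 ≤ 1 - x ^ 2} := by
          ext y
          simp only [Set.mem_preimage, hU_def, Set.mem_setOf_eq]
          constructor
          · rintro ⟨h, _⟩; linarith
          · intro h; exact ⟨by linarith, h1⟩
        rw [hpre, slice_vol m (1 - x ^ 2) (by nlinarith)]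
      · rw [Set.indicator_of_notMem (by simp [Set.mem_Icc]; intro; linarith)]
        have : Prod.mk x ⁻¹' U = ∅ := by
          ext y
          simp only [Set.mem_preimage, hU_def, Set.mem_setOf_eq, Set.mem_empty_iff_false,
            iff_false, not_and]
          intro h
          have : (0:ℝ) ≤ ∑ i, y i ^ 2 := by positivity
          nlinarith
        rw [this, measure_empty]
    · rw [Set.indicator_of_notMem (fun hmem => h1 hmem.1)]
      have : Prod.mk x ⁻¹' U = ∅ := by
        ext y
        simp only [Set.mem_preimage, hU_def, Set.mem_setOf_eq, Set.mem_empty_iff_false,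
          iff_false, not_and]
        intro _
        exact h1
      rw [this, measure_empty]
  simp_rw [hslice]
  rw [lintegral_indicator measurableSet_Icc]
  have hmeas_g : Measurable fun x => ENNReal.ofReal (g x) :=
    (ENNReal.measurable_ofReal.comp hgc.measurable)
  rw [lintegral_mul_const _ hmeas_g]
  congr 1
  rw [← ofReal_integral_eq_lintegral_ofReal
    hgc.integrableOn_Icc
    ((ae_restrict_iff' measurableSet_Icc).mpr (ae_of_all _ fun x hx => by
      have : (0:ℝ) ≤ 1 - x ^ 2 := by
        obtain ⟨hx1, hx2⟩ := hx
        nlinarith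
      positivity))]
  congr 1
  rw [intervalIntegral.integral_of_le (by linarith), ← integral_Icc_eq_integral_Ioc]

/-- The volume of the spherical cap `{w : ‖w‖ ≤ 1, ⟨w,u⟩ ≥ 1 - ε}` equals
`κ_{d-1} ∫_{1-ε}^1 (1 - r²)^{(d-1)/2} dr` and is at least
`(2 κ_{d-1}/(d+1)) ε^{(d+1)/2}`. -/
theorem stmt_1 (d : ℕ) (hd : 2 ≤ d) (u : EuclideanSpace ℝ (Fin d)) (hu : ‖u‖ = 1)
    (ε : ℝ) (hε0 : 0 ≤ ε) (hε1 : ε ≤ 1) :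
    (volume {w : EuclideanSpace ℝ (Fin d) | ‖w‖ ≤ 1 ∧ 1 - ε ≤ ⟪w, u⟫}).toReal =
      unitBallVol (d - 1) * ∫ r in (1 - ε)..1, (1 - r ^ 2) ^ ((d - 1 : ℝ) / 2) ∧
    2 * unitBallVol (d - 1) / (d + 1) * ε ^ ((d + 1 : ℝ) / 2) ≤
      (volume {w : EuclideanSpace ℝ (Fin d) | ‖w‖ ≤ 1 ∧ 1 - ε ≤ ⟪w, u⟫}).toReal := by
  obtain ⟨m, rfl⟩ : ∃ m, d = m + 1 := ⟨d - 1, by omega⟩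
  have hm : 1 ≤ m := by omega
  have hsub : m + 1 - 1 = m := rfl
  have hexp : ((m + 1 : ℕ) : ℝ) - 1 = (m : ℝ) := by push_cast; ring
  set I : ℝ := ∫ r in (1 - ε)..1, (1 - r ^ 2) ^ ((m : ℝ) / 2) with hI_def
  have hI0 : 0 ≤ I := by
    apply intervalIntegral.integral_nonneg (by linarith)
    intro x hx
    obtain ⟨hx1, hx2⟩ := hx
    have : (0:ℝ) ≤ 1 - x ^ 2 := by nlinarith
    positivity
  have hκ0 : 0 ≤ unitBallVol m := ENNReal.toReal_nonneg
  have hVfin : volume (closedBall (0 : EuclideanSpace ℝ (Fin m)) 1) ≠ ⊤ :=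
    measure_closedBall_lt_top.ne
  have h1 : (volume {w : EuclideanSpace ℝ (Fin (m + 1)) | ‖w‖ ≤ 1 ∧ 1 - ε ≤ ⟪w, u⟫}).toReal
      = unitBallVol m * I := by
    rw [cap_vol m u hu ε hε0 hε1, ENNReal.toReal_mul, ENNReal.toReal_ofReal hI0]
    rw [mul_comm]
    rfl
  have hmain : (volume {w : EuclideanSpace ℝ (Fin (m + 1)) | ‖w‖ ≤ 1 ∧ 1 - ε ≤ ⟪w, u⟫}).toReal
      = unitBallVol (m + 1 - 1) * ∫ r in (1 - ε)..1, (1 - r ^ 2) ^ ((((m+1:ℕ):ℝ) - 1) / 2) := by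
    rw [hsub, h1, hexp]
  constructor
  · exact hmain
  · rw [hmain, hsub, hexp, ← hI_def]
    set p : ℝ := (m : ℝ) / 2 with hp_def
    have hp : 0 < p := by
      have : (1:ℝ) ≤ (m:ℝ) := by exact_mod_cast hm
      rw [hp_def]; linarith
    have hle := int_lower p ε hp hε0 hε1
    rw [← hI_def] at hle
    have hee : (((m + 1 : ℕ) : ℝ) + 1) / 2 = p + 1 := by
      rw [hp_def]; push_cast; ring
    rw [hee]
    calc 2 * unitBallVol m / (((m + 1 : ℕ) : ℝ) + 1) * ε ^ (p + 1)
        = unitBallVol m * (ε ^ (p + 1) / (p + 1)) := by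
          rw [hp_def]
          push_cast
          have hne : (m : ℝ) + 2 ≠ 0 := by positivity
          field_simp
          ring
      _ ≤ unitBallVol m * I := by
          exact mul_le_mul_of_nonneg_left hle hκ0
end

section
/- Let d ≥ 1 and k ≥ 1 be integers and a > 0, b > 0 be reals with b·a^d ≥ 1. Then ∫_a^∞ e^{−b r^d} r^{kd−1} dr ≤ (k!/(b·d)) · e^{−b a^d} · a^{d(k−1)}. -/
open MeasureTheory Real Set Filter Topology

section aux

variable {d : ℕ} {b : ℝ}

lemma aux_deriv (hd : 1 ≤ d) (hb : 0 < b) (m : ℕ) (r : ℝ) :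
    HasDerivAt (fun x : ℝ => -(1 / (b * d)) * (Real.exp (-(b * x ^ d)) * x ^ (m * d)))
      (Real.exp (-(b * r ^ d)) * r ^ (m * d + d - 1)
        - (m / b) * (Real.exp (-(b * r ^ d)) * r ^ (m * d - 1))) r := by
  have h1 : HasDerivAt (fun x : ℝ => x ^ d) (d * r ^ (d - 1)) r := hasDerivAt_pow d r
  have h3 : HasDerivAt (fun x : ℝ => Real.exp (-(b * x ^ d)))
      (Real.exp (-(b * r ^ d)) * (-(b * (d * r ^ (d - 1))))) r := ((h1.const_mul b).neg).exp
  have h4 : HasDerivAt (fun x : ℝ => x ^ (m * d)) ((m * d : ℕ) * r ^ (m * d - 1)) r :=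
    hasDerivAt_pow (m * d) r
  have h5 := (h3.mul h4).const_mul (-(1 / (b * d)))
  refine h5.congr_deriv ?_
  have e1 : r ^ (m * d + d - 1) = r ^ (d - 1) * r ^ (m * d) := by
    rw [← pow_add]; congr 1; omega
  have hd0 : (d : ℝ) ≠ 0 := by positivity
  rw [e1]
  push_cast
  field_simp
  ring

lemma aux_int (hd : 1 ≤ d) (hb : 0 < b) (n : ℕ) {a : ℝ} (ha : 0 < a) :
    IntegrableOn (fun r : ℝ => Real.exp (-(b * r ^ d)) * r ^ n) (Ioi a) := by
  apply integrable_of_isBigO_exp_neg (half_pos hb)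
  · exact (((Real.continuous_exp.comp (continuous_const.mul (continuous_pow d)).neg).mul
      (continuous_pow n))).continuousOn
  · rw [Asymptotics.isBigO_iff]
    refine ⟨1, ?_⟩
    have h0 := tendsto_rpow_mul_exp_neg_mul_atTop_nhds_zero n (b / 2) (half_pos hb)
    have h0' : Tendsto (fun x : ℝ => x ^ n * Real.exp (-(b / 2) * x)) atTop (𝓝 0) := by
      refine h0.congr' ?_
      filter_upwards [eventually_gt_atTop (0 : ℝ)] with x hx
      rw [Real.rpow_natCast]
    filter_upwards [eventually_ge_atTop (1 : ℝ), h0'.eventually (gt_mem_nhds one_pos)]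
      with x hx hx2
    have hx0 : (0 : ℝ) < x := lt_of_lt_of_le one_pos hx
    have hxd : x ≤ x ^ d := le_self_pow₀ hx (by omega)
    have key : Real.exp (-(b * x ^ d)) * x ^ n ≤ Real.exp (-(b / 2) * x) := by
      have e1 : Real.exp (-(b * x ^ d)) ≤ Real.exp (-(b / 2) * x) * Real.exp (-(b / 2) * x) := by
        rw [← Real.exp_add]
        apply Real.exp_le_exp.2
        nlinarith
      calc Real.exp (-(b * x ^ d)) * x ^ n
          ≤ (Real.exp (-(b / 2) * x) * Real.exp (-(b / 2) * x)) * x ^ n := by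
            apply mul_le_mul_of_nonneg_right e1 (by positivity)
        _ = (x ^ n * Real.exp (-(b / 2) * x)) * Real.exp (-(b / 2) * x) := by ring
        _ ≤ 1 * Real.exp (-(b / 2) * x) := by
            apply mul_le_mul_of_nonneg_right hx2.le (Real.exp_pos _).le
        _ = Real.exp (-(b / 2) * x) := one_mul _
    rw [Real.norm_eq_abs, Real.norm_eq_abs, abs_of_nonneg (by positivity),
      abs_of_nonneg (Real.exp_pos _).le, one_mul]
    exact key

lemma aux_tendsto (hd : 1 ≤ d) (hb : 0 < b) (n : ℕ) :
    Tendsto (fun r : ℝ => Real.exp (-(b * r ^ d)) * r ^ n) atTop (𝓝 0) := by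
  have h0 := tendsto_rpow_mul_exp_neg_mul_atTop_nhds_zero n b hb
  have h0' : Tendsto (fun x : ℝ => x ^ n * Real.exp (-b * x)) atTop (𝓝 0) := by
    refine h0.congr' ?_
    filter_upwards [eventually_gt_atTop (0 : ℝ)] with x hx
    rw [Real.rpow_natCast]
  apply squeeze_zero' (g := fun x : ℝ => x ^ n * Real.exp (-b * x))
  · filter_upwards [eventually_ge_atTop (0 : ℝ)] with x hx
    positivity
  · filter_upwards [eventually_ge_atTop (1 : ℝ)] with x hx
    have hx0 : (0 : ℝ) < x := lt_of_lt_of_le one_pos hx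
    have hxd : x ≤ x ^ d := le_self_pow₀ hx (by omega)
    rw [mul_comm]
    apply mul_le_mul_of_nonneg_left _ (by positivity)
    apply Real.exp_le_exp.2
    nlinarith
  · exact h0'

lemma aux_rec (hd : 1 ≤ d) (hb : 0 < b) {a : ℝ} (ha : 0 < a) (m : ℕ) :
    ∫ r in Ioi a, Real.exp (-(b * r ^ d)) * r ^ (m * d + d - 1)
      = 1 / (b * d) * Real.exp (-(b * a ^ d)) * a ^ (m * d)
        + (m / b) * ∫ r in Ioi a, Real.exp (-(b * r ^ d)) * r ^ (m * d - 1) := by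
  set F : ℝ → ℝ := fun x => -(1 / (b * d)) * (Real.exp (-(b * x ^ d)) * x ^ (m * d)) with hF
  set f' : ℝ → ℝ := fun r => Real.exp (-(b * r ^ d)) * r ^ (m * d + d - 1)
    - (m / b) * (Real.exp (-(b * r ^ d)) * r ^ (m * d - 1)) with hf'
  have h1 : IntegrableOn (fun r : ℝ => Real.exp (-(b * r ^ d)) * r ^ (m * d + d - 1)) (Ioi a) :=
    aux_int hd hb _ ha
  have h2 : IntegrableOn (fun r : ℝ => Real.exp (-(b * r ^ d)) * r ^ (m * d - 1)) (Ioi a) :=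
    aux_int hd hb _ ha
  have hferiv : ∀ x ∈ Ioi a, HasDerivAt F (f' x) x := fun x _ => aux_deriv hd hb m x
  have hcont : ContinuousWithinAt F (Ici a) a := by
    apply Continuous.continuousWithinAt
    exact continuous_const.mul ((Real.continuous_exp.comp
      (continuous_const.mul (continuous_pow d)).neg).mul (continuous_pow (m * d)))
  have hint : IntegrableOn f' (Ioi a) := h1.sub (h2.const_mul _)
  have hten : Tendsto F atTop (𝓝 0) := by
    have h := Tendsto.const_mul (-(1 / (b * d))) (aux_tendsto hd hb (m * d))
    rw [mul_zero] at h
    exact h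
  have heq := integral_Ioi_of_hasDerivAt_of_tendsto hcont hferiv hint hten
  rw [hf'] at heq
  rw [integral_sub h1 (h2.const_mul _), integral_const_mul] at heq
  have : F a = -(1 / (b * d)) * (Real.exp (-(b * a ^ d)) * a ^ (m * d)) := rfl
  rw [this] at heq
  linarith [heq]

lemma aux_main (hd : 1 ≤ d) (hb : 0 < b) {a : ℝ} (ha : 0 < a) (hba : 1 ≤ b * a ^ d) (m : ℕ) :
    ∫ r in Ioi a, Real.exp (-(b * r ^ d)) * r ^ (m * d + d - 1)
      ≤ (Nat.factorial (m + 1) : ℝ) / (b * d) * Real.exp (-(b * a ^ d)) * a ^ (d * m) := by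
  have hd0 : (0 : ℝ) < d := by positivity
  induction m with
  | zero =>
    rw [aux_rec hd hb ha 0]
    simp [Nat.factorial]
  | succ m ih =>
    have e1 : (m + 1) * d - 1 = m * d + d - 1 := by
      rw [add_mul, one_mul]
    rw [aux_rec hd hb ha (m + 1), e1]
    have hI0 : (0 : ℝ) ≤ ((m + 1 : ℕ) : ℝ) / b := by positivity
    have step1 : ((m + 1 : ℕ) : ℝ) / b * ∫ r in Ioi a, Real.exp (-(b * r ^ d)) * r ^ (m * d + d - 1)
        ≤ ((m + 1 : ℕ) : ℝ) / b *
          ((Nat.factorial (m + 1) : ℝ) / (b * d) * Real.exp (-(b * a ^ d)) * a ^ (d * m)) := by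
      exact mul_le_mul_of_nonneg_left ih hI0
    -- a^(d*m) / b ≤ a^(d*(m+1))
    have step2 : a ^ (d * m) / b ≤ a ^ (d * (m + 1)) := by
      have e2 : a ^ (d * (m + 1)) = a ^ (d * m) * a ^ d := by rw [← pow_add]; ring_nf
      rw [div_le_iff₀ hb, e2]
      calc a ^ (d * m) = a ^ (d * m) * 1 := (mul_one _).symm
        _ ≤ a ^ (d * m) * (b * a ^ d) := by
            apply mul_le_mul_of_nonneg_left hba (by positivity)
        _ = a ^ (d * m) * a ^ d * b := by ring
    have epos : (0 : ℝ) < Real.exp (-(b * a ^ d)) := Real.exp_pos _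
    have e3 : (m + 1) * d = d * (m + 1) := by ring
    rw [e3]
    have fact_ineq : (1 : ℝ) + ((m + 1 : ℕ) : ℝ) * (Nat.factorial (m + 1) : ℝ)
        ≤ (Nat.factorial (m + 2) : ℝ) := by
      have h1 : (1 : ℝ) ≤ (Nat.factorial (m + 1) : ℝ) := by
        exact_mod_cast Nat.one_le_iff_ne_zero.2 (Nat.factorial_ne_zero _)
      have h2 : (Nat.factorial (m + 2) : ℝ)
          = ((m + 1 : ℕ) : ℝ) * (Nat.factorial (m + 1) : ℝ) + (Nat.factorial (m + 1) : ℝ) := by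
        rw [Nat.factorial_succ (m + 1)]
        push_cast
        ring
      linarith
    calc 1 / (b * d) * Real.exp (-(b * a ^ d)) * a ^ (d * (m + 1))
          + ((m + 1 : ℕ) : ℝ) / b * ∫ r in Ioi a, Real.exp (-(b * r ^ d)) * r ^ (m * d + d - 1)
        ≤ 1 / (b * d) * Real.exp (-(b * a ^ d)) * a ^ (d * (m + 1))
          + ((m + 1 : ℕ) : ℝ) / b *
            ((Nat.factorial (m + 1) : ℝ) / (b * d) * Real.exp (-(b * a ^ d)) * a ^ (d * m)) :=
          by linarith [step1]
      _ = 1 / (b * d) * Real.exp (-(b * a ^ d)) * a ^ (d * (m + 1))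
          + ((m + 1 : ℕ) : ℝ) * (Nat.factorial (m + 1) : ℝ) / (b * d) * Real.exp (-(b * a ^ d))
            * (a ^ (d * m) / b) := by ring
      _ ≤ 1 / (b * d) * Real.exp (-(b * a ^ d)) * a ^ (d * (m + 1))
          + ((m + 1 : ℕ) : ℝ) * (Nat.factorial (m + 1) : ℝ) / (b * d) * Real.exp (-(b * a ^ d))
            * a ^ (d * (m + 1)) := by
          apply add_le_add le_rfl
          apply mul_le_mul_of_nonneg_left step2 (by positivity)
      _ = (1 + ((m + 1 : ℕ) : ℝ) * (Nat.factorial (m + 1) : ℝ)) / (b * d)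
            * Real.exp (-(b * a ^ d)) * a ^ (d * (m + 1)) := by ring
      _ ≤ (Nat.factorial (m + 2) : ℝ) / (b * d) * Real.exp (-(b * a ^ d)) * a ^ (d * (m + 1)) := by
          gcongr
      _ = (Nat.factorial (m + 1 + 1) : ℝ) / (b * d) * Real.exp (-(b * a ^ d)) * a ^ (d * (m + 1))
          := by norm_num

end aux

/-- Inequality (PDTestpart): for `d, k ≥ 1`, `a, b > 0` with `b a^d ≥ 1`,
`∫_a^∞ e^{-b r^d} r^{kd-1} dr ≤ (k!/(b d)) e^{-b a^d} a^{d(k-1)}`. -/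
theorem stmt_4 (d k : ℕ) (hd : 1 ≤ d) (hk : 1 ≤ k) (a b : ℝ) (ha : 0 < a) (hb : 0 < b)
    (hba : 1 ≤ b * a ^ d) :
    ∫ r in Set.Ioi a, Real.exp (-(b * r ^ d)) * r ^ (k * d - 1) ≤
      (Nat.factorial k : ℝ) / (b * d) * Real.exp (-(b * a ^ d)) * a ^ (d * (k - 1)) := by
  obtain ⟨m, rfl⟩ : ∃ m, k = m + 1 := ⟨k - 1, by omega⟩
  have e1 : (m + 1) * d - 1 = m * d + d - 1 := by
    rw [add_mul, one_mul]
  rw [e1]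
  simpa using aux_main hd hb ha hba m
end

section
/- Fix an integer k ≥ 0 and for s > e define a_s := log s + k·log log s − log k!. Then the normalization s·e^{−a_s}·∑_{i=0}^{k} a_s^{i}/i! equals 1 + O((log log s)/(log s)) as s → ∞; that is, there exist constants C > 0 and s₀ > e such that for all s ≥ s₀, |s·e^{−a_s}·∑_{i=0}^{k} a_s^{i}/i! − 1| ≤ C·(log log s)/(log s). -/
open Real

/-- The level `a_s = log s + k log log s - log k!` from Section 4. -/
noncomputable def aFun (k : ℕ) (s : ℝ) : ℝ :=
  Real.log s + k * Real.log (Real.log s) - Real.log (Nat.factorial k)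

/-- `s e^{-a_s} ∑_{i=0}^k a_s^i/i! = 1 + O((log log s)/(log s))` as `s → ∞`. -/
theorem stmt_5 (k : ℕ) :
    ∃ C > (0 : ℝ), ∃ s₀ > Real.exp 1, ∀ s ≥ s₀,
      |s * Real.exp (-(aFun k s)) *
          (∑ i ∈ Finset.range (k + 1), (aFun k s) ^ i / (Nat.factorial i : ℝ)) - 1| ≤
        C * (Real.log (Real.log s) / Real.log s) := by
  have hK1 : (1:ℝ) ≤ (Nat.factorial k : ℝ) := by
    exact_mod_cast Nat.one_le_iff_ne_zero.mpr (Nat.factorial_ne_zero k)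
  have hKpos : (0:ℝ) < (Nat.factorial k : ℝ) := lt_of_lt_of_le one_pos hK1
  set K : ℝ := (Nat.factorial k : ℝ) with hKdef
  set M : ℝ := max (max 1 (Real.log K)) (Real.log (4*((k:ℝ)+1)^2)) with hMdef
  have hM1 : (1:ℝ) ≤ M := le_trans (le_max_left _ _) (le_max_left _ _)
  have hMK : Real.log K ≤ M := le_trans (le_max_right _ _) (le_max_left _ _)
  have hM2 : Real.log (4*((k:ℝ)+1)^2) ≤ M := le_max_right _ _
  set C : ℝ := (k:ℝ)*2^(k-1)*((k:ℝ)+1) + (k:ℝ)*2^k*K + 1 with hCdef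
  have hCpos : (0:ℝ) < C := by positivity
  refine ⟨C, hCpos, Real.exp (Real.exp M), ?_, ?_⟩
  · apply Real.exp_lt_exp.mpr
    have h2 : (1:ℝ) + 1 ≤ Real.exp 1 := by
      have := Real.add_one_le_exp (1:ℝ); linarith
    have := Real.exp_le_exp.mpr hM1
    linarith
  intro s hs
  have hspos : 0 < s := lt_of_lt_of_le (Real.exp_pos _) hs
  set L : ℝ := Real.log s with hLdef
  set LL : ℝ := Real.log L with hLLdef
  have hL : Real.exp M ≤ L := by
    rw [hLdef, ← Real.log_exp (Real.exp M)]
    exact Real.log_le_log (Real.exp_pos _) hs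
  have hLpos : (0:ℝ) < L := lt_of_lt_of_le (Real.exp_pos _) hL
  have hL1 : (1:ℝ) ≤ L := by
    have : Real.exp 1 ≤ Real.exp M := Real.exp_le_exp.mpr hM1
    have h2 := Real.add_one_le_exp (1:ℝ)
    linarith
  have hLL : M ≤ LL := by
    rw [hLLdef, ← Real.log_exp M]
    exact Real.log_le_log (Real.exp_pos _) hL
  have hLL1 : (1:ℝ) ≤ LL := le_trans hM1 hLL
  have hlogK : (0:ℝ) ≤ Real.log K := Real.log_nonneg hK1
  have hlogKLL : Real.log K ≤ LL := le_trans hMK hLL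
  -- (k+1) * LL ≤ L
  have hsqL : 2*((k:ℝ)+1) ≤ Real.sqrt L := by
    have h4 : 4*((k:ℝ)+1)^2 ≤ L := by
      have := Real.exp_le_exp.mpr hM2
      have h0 : (0:ℝ) < 4*((k:ℝ)+1)^2 := by positivity
      rw [Real.exp_log h0] at this
      linarith
    have := Real.sqrt_le_sqrt h4
    calc 2*((k:ℝ)+1) = Real.sqrt ((2*((k:ℝ)+1))^2) := by
          rw [Real.sqrt_sq (by positivity)]
      _ = Real.sqrt (4*((k:ℝ)+1)^2) := by ring_nf
      _ ≤ Real.sqrt L := this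
  have hLLsq : LL ≤ 2 * Real.sqrt L := by
    have hs0 : (0:ℝ) < Real.sqrt L := Real.sqrt_pos.mpr hLpos
    have h1 : Real.log (Real.sqrt L) ≤ Real.sqrt L - 1 := Real.log_le_sub_one_of_pos hs0
    have h2 : LL = 2 * Real.log (Real.sqrt L) := by
      rw [hLLdef, ← Real.sq_sqrt hLpos.le, Real.log_pow]
      push_cast; ring_nf
      rw [Real.sq_sqrt hLpos.le]
    rw [h2]; linarith
  have hkLL : ((k:ℝ)+1) * LL ≤ L := by
    have hsqnn : (0:ℝ) ≤ Real.sqrt L := Real.sqrt_nonneg L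
    have hLsq : Real.sqrt L * Real.sqrt L = L := Real.mul_self_sqrt hLpos.le
    nlinarith
  -- properties of a
  set a : ℝ := aFun k s with hadef
  have haL : a - L = (k:ℝ)*LL - Real.log K := by
    rw [hadef, aFun]; push_cast; ring
  have hbabs : |a - L| ≤ ((k:ℝ)+1) * LL := by
    rw [haL, abs_le]
    have hk0 : (0:ℝ) ≤ (k:ℝ) := Nat.cast_nonneg k
    constructor
    · nlinarith
    · nlinarith
  have hbL : |a - L| ≤ L := le_trans hbabs hkLL
  have ha0 : 0 ≤ a := by
    have := abs_le.mp hbL; linarith [this.1]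
  have ha2 : a ≤ 2 * L := by
    have := abs_le.mp hbL; linarith [this.2]
  -- key identity : s * exp (-a) = K / L^k
  have hexpa : Real.exp a = s * L ^ k / K := by
    rw [hadef, aFun, Real.exp_sub, Real.exp_add, ← hLdef, ← hLLdef,
      Real.exp_nat_mul, Real.exp_log hspos, Real.exp_log hLpos, ← hKdef,
      Real.exp_log hKpos]
  have hkey : s * Real.exp (-a) = K / L ^ k := by
    rw [Real.exp_neg, hexpa]
    field_simp
  -- split the sum
  have hsum : (∑ i ∈ Finset.range (k + 1), a ^ i / (Nat.factorial i : ℝ))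
      = (∑ i ∈ Finset.range k, a ^ i / (Nat.factorial i : ℝ)) + a ^ k / K := by
    rw [Finset.sum_range_succ, hKdef]
  have hLk : (0:ℝ) < L ^ k := pow_pos hLpos k
  have hLLL : 0 ≤ LL / L := by positivity
  -- bound 1 : |a^k / L^k - 1| ≤ k*2^(k-1)*(k+1) * (LL/L)
  have hbound1 : |a ^ k / L ^ k - 1| ≤ (k:ℝ)*2^(k-1)*((k:ℝ)+1) * (LL / L) := by
    rcases Nat.eq_zero_or_pos k with hk0 | hkpos
    · subst hk0; simp
    · have hgeom : (∑ i ∈ Finset.range k, a ^ i * L ^ (k - 1 - i)) * (a - L)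
          = a ^ k - L ^ k := geom_sum₂_mul a L k
      have hterm : ∀ i ∈ Finset.range k,
          |a ^ i * L ^ (k - 1 - i)| ≤ 2^(k-1) * L^(k-1) := by
        intro i hi
        have hik : i ≤ k - 1 := Nat.le_sub_one_of_lt (Finset.mem_range.mp hi)
        rw [abs_of_nonneg (by positivity)]
        have h1 : a ^ i ≤ (2*L) ^ i := pow_le_pow_left₀ ha0 ha2 i
        have h2 : (2*L)^i = 2^i * L^i := mul_pow 2 L i
        have h3 : (2:ℝ)^i ≤ 2^(k-1) := pow_le_pow_right₀ (by norm_num) hik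
        have h4 : L^i * L^(k-1-i) = L^(k-1) := by
          rw [← pow_add, Nat.add_sub_cancel' hik]
        have h5 : (0:ℝ) ≤ L ^ (k-1-i) := by positivity
        calc a ^ i * L ^ (k - 1 - i) ≤ 2^i * L^i * L^(k-1-i) :=
              mul_le_mul_of_nonneg_right (h2 ▸ h1) h5
          _ = 2^i * L^(k-1) := by rw [mul_assoc, h4]
          _ ≤ 2^(k-1) * L^(k-1) :=
              mul_le_mul_of_nonneg_right h3 (pow_pos hLpos (k-1)).le
      have hsumabs : |∑ i ∈ Finset.range k, a ^ i * L ^ (k - 1 - i)|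
          ≤ (k:ℝ) * (2^(k-1) * L^(k-1)) := by
        calc |∑ i ∈ Finset.range k, a ^ i * L ^ (k - 1 - i)|
            ≤ ∑ i ∈ Finset.range k, |a ^ i * L ^ (k - 1 - i)| :=
              Finset.abs_sum_le_sum_abs _ _
          _ ≤ ∑ _i ∈ Finset.range k, 2^(k-1) * L^(k-1) :=
              Finset.sum_le_sum hterm
          _ = (k:ℝ) * (2^(k-1) * L^(k-1)) := by
              rw [Finset.sum_const, Finset.card_range, nsmul_eq_mul]
      have hdiff : |a ^ k - L ^ k| ≤ (k:ℝ) * (2^(k-1) * L^(k-1)) * (((k:ℝ)+1) * LL) := by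
        rw [← hgeom, abs_mul]
        exact mul_le_mul hsumabs hbabs (abs_nonneg _) (by positivity)
      have hLkk : L ^ k = L ^ (k-1) * L := by
        rw [← pow_succ, Nat.sub_add_cancel hkpos]
      have heq : |a ^ k / L ^ k - 1| = |a ^ k - L ^ k| / L ^ k := by
        rw [show a ^ k / L ^ k - 1 = (a ^ k - L ^ k) / L ^ k by field_simp,
          abs_div, abs_of_pos hLk]
      rw [heq, div_le_iff₀ hLk]
      calc |a ^ k - L ^ k| ≤ (k:ℝ) * (2^(k-1) * L^(k-1)) * (((k:ℝ)+1) * LL) := hdiff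
        _ = (k:ℝ)*2^(k-1)*((k:ℝ)+1) * (LL / L) * L ^ k := by
            rw [hLkk]; field_simp
  -- bound 2 : K / L^k * (∑ i < k, a^i/i!) ≤ k*2^k*K * (LL/L)
  have hbound2 : |K / L ^ k * (∑ i ∈ Finset.range k, a ^ i / (Nat.factorial i : ℝ))|
      ≤ (k:ℝ)*2^k*K * (LL / L) := by
    rcases Nat.eq_zero_or_pos k with hk0 | hkpos
    · subst hk0; simp
    · have hterm : ∀ i ∈ Finset.range k,
          a ^ i / (Nat.factorial i : ℝ) ≤ 2^k * L^(k-1) := by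
        intro i hi
        have hik : i ≤ k - 1 := Nat.le_sub_one_of_lt (Finset.mem_range.mp hi)
        have hfac : (1:ℝ) ≤ (Nat.factorial i : ℝ) := by
          exact_mod_cast Nat.one_le_iff_ne_zero.mpr (Nat.factorial_ne_zero i)
        have h1 : a ^ i ≤ (2*L) ^ i := pow_le_pow_left₀ ha0 ha2 i
        have h2 : (2*L)^i = 2^i * L^i := mul_pow 2 L i
        have h3 : (2:ℝ)^i ≤ 2^k := pow_le_pow_right₀ (by norm_num) (le_of_lt (Finset.mem_range.mp hi))
        have h4 : L^i ≤ L^(k-1) := pow_le_pow_right₀ hL1 hik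
        have h5 : a ^ i / (Nat.factorial i : ℝ) ≤ a ^ i := by
          apply div_le_self (pow_nonneg ha0 i) hfac
        calc a ^ i / (Nat.factorial i : ℝ) ≤ a ^ i := h5
          _ ≤ 2^i * L^i := by rw [← h2]; exact h1
          _ ≤ 2^k * L^(k-1) :=
              mul_le_mul h3 h4 (pow_nonneg hLpos.le i) (pow_nonneg (by norm_num) k)
      have hTnn : 0 ≤ ∑ i ∈ Finset.range k, a ^ i / (Nat.factorial i : ℝ) := by
        apply Finset.sum_nonneg; intro i _; positivity
      have hT : (∑ i ∈ Finset.range k, a ^ i / (Nat.factorial i : ℝ))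
          ≤ (k:ℝ) * (2^k * L^(k-1)) := by
        calc (∑ i ∈ Finset.range k, a ^ i / (Nat.factorial i : ℝ))
            ≤ ∑ _i ∈ Finset.range k, 2^k * L^(k-1) := Finset.sum_le_sum hterm
          _ = (k:ℝ) * (2^k * L^(k-1)) := by
              rw [Finset.sum_const, Finset.card_range, nsmul_eq_mul]
      have hLkk : L ^ k = L ^ (k-1) * L := by
        rw [← pow_succ, Nat.sub_add_cancel hkpos]
      rw [abs_of_nonneg (by positivity)]
      rw [hLkk, div_mul_eq_mul_div, div_le_iff₀ (by positivity)]
      have h1L : 1 ≤ LL := hLL1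
      calc K * (∑ i ∈ Finset.range k, a ^ i / (Nat.factorial i : ℝ))
          ≤ K * ((k:ℝ) * (2^k * L^(k-1))) := mul_le_mul_of_nonneg_left hT hKpos.le
        _ ≤ K * ((k:ℝ) * (2^k * L^(k-1))) * LL := le_mul_of_one_le_right (by positivity) hLL1
        _ = (k:ℝ)*2^k*K * (LL / L) * (L^(k-1) * L) := by field_simp
  -- assemble
  have hexpand : s * Real.exp (-a) *
      (∑ i ∈ Finset.range (k + 1), a ^ i / (Nat.factorial i : ℝ)) - 1
      = K / L ^ k * (∑ i ∈ Finset.range k, a ^ i / (Nat.factorial i : ℝ))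
        + (a ^ k / L ^ k - 1) := by
    rw [hkey, hsum]
    field_simp
    ring
  calc |s * Real.exp (-a) * (∑ i ∈ Finset.range (k + 1), a ^ i / (Nat.factorial i : ℝ)) - 1|
      = |K / L ^ k * (∑ i ∈ Finset.range k, a ^ i / (Nat.factorial i : ℝ))
        + (a ^ k / L ^ k - 1)| := by rw [hexpand]
    _ ≤ |K / L ^ k * (∑ i ∈ Finset.range k, a ^ i / (Nat.factorial i : ℝ))|
        + |a ^ k / L ^ k - 1| := abs_add_le _ _
    _ ≤ (k:ℝ)*2^k*K * (LL / L) + (k:ℝ)*2^(k-1)*((k:ℝ)+1) * (LL / L) :=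
        add_le_add hbound2 hbound1
    _ ≤ C * (LL / L) := by
        have hexp2 : ((k:ℝ)*2^(k-1)*((k:ℝ)+1) + (k:ℝ)*2^k*K + 1) * (LL/L)
            = (k:ℝ)*2^k*K*(LL/L) + (k:ℝ)*2^(k-1)*((k:ℝ)+1)*(LL/L) + (LL/L) := by ring
        rw [hCdef, hexp2]
        linarith
end

section
/- Let v_0, …, v_n be points in ℝ^d all at the same distance r from a point z (i.e. ‖v_i − z‖ = r for all i). Then for every point p in the convex hull of {v_0, …, v_n} there exists an index i with ‖p − v_i‖² ≤ r² − ‖p − z‖². In particular, the convex hull of {v_0, …, v_n} is contained in the union of the closed balls B(v_i, r). -/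
open Metric

private lemma key_6 (d n : ℕ) (v : Fin (n + 1) → EuclideanSpace ℝ (Fin d))
    (z : EuclideanSpace ℝ (Fin d)) (r : ℝ) (hv : ∀ i, ‖v i - z‖ = r)
    (p : EuclideanSpace ℝ (Fin d)) (hp : p ∈ convexHull ℝ (Set.range v)) :
    ∃ i, ‖p - v i‖ ^ 2 ≤ r ^ 2 - ‖p - z‖ ^ 2 := by
  rw [convexHull_range_eq_exists_affineCombination] at hp
  obtain ⟨s, w, hw₀, hw₁, rfl⟩ := hp
  set p := s.affineCombination ℝ v w with hpdef
  have hplin : p = ∑ i ∈ s, w i • v i := by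
    rw [hpdef, Finset.affineCombination_eq_linear_combination s v w hw₁]
  -- there exists i ∈ s with ⟪p - z, v i - z⟫ ≥ ‖p - z‖²
  have hsum : ∑ i ∈ s, w i * (inner ℝ (p - z) (v i - z) : ℝ) = ‖p - z‖ ^ 2 := by
    have : ∑ i ∈ s, w i • (v i - z) = p - z := by
      simp only [smul_sub]
      rw [Finset.sum_sub_distrib, ← Finset.sum_smul, hw₁, one_smul, ← hplin]
    calc ∑ i ∈ s, w i * (inner ℝ (p - z) (v i - z) : ℝ)
        = inner ℝ (p - z) (∑ i ∈ s, w i • (v i - z)) := by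
          rw [inner_sum]; congr 1; ext i; rw [real_inner_smul_right]
      _ = ‖p - z‖ ^ 2 := by rw [this, real_inner_self_eq_norm_sq]
  have hne : s.Nonempty := by
    by_contra h
    rw [Finset.not_nonempty_iff_eq_empty] at h
    simp [h] at hw₁
  obtain ⟨j, hjs, hjpos⟩ : ∃ j ∈ s, 0 < w j := by
    by_contra h
    push_neg at h
    have : ∑ i ∈ s, w i ≤ 0 := Finset.sum_nonpos fun i hi => h i hi
    linarith [hw₁ ▸ this]
  obtain ⟨i, his, hi⟩ : ∃ i ∈ s, ‖p - z‖ ^ 2 ≤ (inner ℝ (p - z) (v i - z) : ℝ) := by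
    by_contra h
    push_neg at h
    have hlt : ∑ i ∈ s, w i * (inner ℝ (p - z) (v i - z) : ℝ)
        < ∑ i ∈ s, w i * ‖p - z‖ ^ 2 := by
      apply Finset.sum_lt_sum
      · intro i hi
        rcases lt_or_eq_of_le (hw₀ i hi) with hpos | h0
        · exact le_of_lt (by nlinarith [h i hi])
        · simp [← h0]
      · exact ⟨j, hjs, by nlinarith [h j hjs]⟩
    rw [hsum, ← Finset.sum_mul, hw₁, one_mul] at hlt
    exact lt_irrefl _ hlt
  refine ⟨i, ?_⟩
  have hexp : ‖p - v i‖ ^ 2 = ‖p - z‖ ^ 2 - 2 * (inner ℝ (p - z) (v i - z) : ℝ) + ‖v i - z‖ ^ 2 := by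
    have : p - v i = (p - z) - (v i - z) := by abel
    rw [this, norm_sub_sq_real]
  rw [hexp, hv i]
  nlinarith [hi]

/-- A simplex inscribed in a sphere of radius `r` around `z` is covered by the balls
of radius `r` centered at its vertices, quantitatively:
for any `p` in the convex hull there is a vertex `v i` with
`‖p - v i‖² ≤ r² - ‖p - z‖²`. -/
theorem stmt_6 (d n : ℕ) (v : Fin (n + 1) → EuclideanSpace ℝ (Fin d))
    (z : EuclideanSpace ℝ (Fin d)) (r : ℝ) (hv : ∀ i, ‖v i - z‖ = r) :
    (∀ p ∈ convexHull ℝ (Set.range v), ∃ i, ‖p - v i‖ ^ 2 ≤ r ^ 2 - ‖p - z‖ ^ 2) ∧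
    convexHull ℝ (Set.range v) ⊆ ⋃ i, closedBall (v i) r := by
  have key := key_6 d n v z r hv
  refine ⟨key, fun p hp => ?_⟩
  obtain ⟨i, hi⟩ := key p hp
  have hr : 0 ≤ r := (hv 0) ▸ norm_nonneg _
  refine Set.mem_iUnion.2 ⟨i, ?_⟩
  rw [mem_closedBall, dist_eq_norm]
  nlinarith [norm_nonneg (p - v i), norm_nonneg (p - z)]
end

section
/- Let ℓ ≥ 1 and m ≥ 0, and let x_1, …, x_ℓ and u_1, …, u_m be points in ℝ^d. Suppose there exist z₁ ∈ ℝ^d and r₁ > 0 with ‖x_i − z₁‖ = r₁ for all i and ‖u_j − z₁‖ = r₁ for all j, and there exist z₂ ∈ ℝ^d and r₂ ≥ r₁ with ‖u_j − z₂‖ = r₂ for all j and ‖x_i − z₂‖ > r₂ for all i. Then z₂ does not belong to the convex hull of {x_1, …, x_ℓ} ∪ {u_1, …, u_m}. -/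
open RealInnerProductSpace

private lemma key_ineq {d : ℕ} (p z₁ z₂ : EuclideanSpace ℝ (Fin d)) (r₁ r₂ : ℝ)
    (hr₂ : 0 ≤ r₂) (h1 : ‖p - z₁‖ = r₁) (h2 : r₂ ≤ ‖p - z₂‖) :
    (r₂ ^ 2 - r₁ ^ 2 + ‖z₁‖ ^ 2 - ‖z₂‖ ^ 2) / 2 ≤ ⟪p, z₁ - z₂⟫ := by
  have e1 := norm_sub_sq_real p z₁
  have e2 := norm_sub_sq_real p z₂
  have e3 : ⟪p, z₁ - z₂⟫ = ⟪p, z₁⟫ - ⟪p, z₂⟫ := inner_sub_right _ _ _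
  have h2' : r₂ ^ 2 ≤ ‖p - z₂‖ ^ 2 := pow_le_pow_left₀ hr₂ h2 2
  rw [h1] at e1
  nlinarith [h2', e1, e2, e3]

/-- First step of Lemma 6.2: if the points `x` and `u` lie on a sphere of radius `r₁`
around `z₁`, the points `u` lie on a sphere of radius `r₂ ≥ r₁` around `z₂`, and all the
points `x` lie strictly outside the ball `B(z₂, r₂)`, then `z₂` is not in the convex hull
of the `x`'s and `u`'s. -/
theorem stmt_7 (d ℓ m : ℕ) (hℓ : 1 ≤ ℓ)
    (x : Fin ℓ → EuclideanSpace ℝ (Fin d)) (u : Fin m → EuclideanSpace ℝ (Fin d))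
    (z₁ z₂ : EuclideanSpace ℝ (Fin d)) (r₁ r₂ : ℝ) (hr₁ : 0 < r₁)
    (hx₁ : ∀ i, ‖x i - z₁‖ = r₁) (hu₁ : ∀ j, ‖u j - z₁‖ = r₁)
    (hr : r₁ ≤ r₂)
    (hu₂ : ∀ j, ‖u j - z₂‖ = r₂) (hx₂ : ∀ i, r₂ < ‖x i - z₂‖) :
    z₂ ∉ convexHull ℝ (Set.range x ∪ Set.range u) := by
  intro hz
  have hr₂ : 0 ≤ r₂ := le_trans hr₁.le hr
  set c : ℝ := (r₂ ^ 2 - r₁ ^ 2 + ‖z₁‖ ^ 2 - ‖z₂‖ ^ 2) / 2 with hc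
  have hlin : IsLinearMap ℝ (fun p : EuclideanSpace ℝ (Fin d) => ⟪p, z₁ - z₂⟫) :=
    ⟨fun a b => inner_add_left _ _ _, fun t a => real_inner_smul_left _ _ _⟩
  have hsub : convexHull ℝ (Set.range x ∪ Set.range u) ⊆
      {p : EuclideanSpace ℝ (Fin d) | c ≤ ⟪p, z₁ - z₂⟫} := by
    apply convexHull_min _ (convex_halfSpace_ge hlin c)
    rintro p (⟨i, rfl⟩ | ⟨j, rfl⟩)
    · exact key_ineq _ _ _ _ _ hr₂ (hx₁ i) (hx₂ i).le
    · exact key_ineq _ _ _ _ _ hr₂ (hu₁ j) (hu₂ j).ge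
  have hz2 : c ≤ ⟪z₂, z₁ - z₂⟫ := hsub hz
  have e3 : ⟪z₂, z₁ - z₂⟫ = ⟪z₂, z₁⟫ - ⟪z₂, z₂⟫ := inner_sub_right _ _ _
  have e4 := norm_sub_sq_real z₁ z₂
  have e5 : ⟪z₂, z₂⟫ = ‖z₂‖ ^ 2 := real_inner_self_eq_norm_sq z₂
  have e6 : ⟪z₂, z₁⟫ = ⟪z₁, z₂⟫ := real_inner_comm _ _
  -- deduce r₂² - r₁² ≤ -‖z₁ - z₂‖²
  have h7 : r₂ ^ 2 - r₁ ^ 2 + ‖z₁ - z₂‖ ^ 2 ≤ 0 := by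
    rw [hc] at hz2; nlinarith
  have h8 : ‖z₁ - z₂‖ ^ 2 ≤ 0 := by nlinarith
  have h9 : z₁ = z₂ := by
    have : ‖z₁ - z₂‖ = 0 := by nlinarith [norm_nonneg (z₁ - z₂)]
    rwa [norm_sub_eq_zero_iff] at this
  have h10 : r₂ ≤ r₁ := by nlinarith [norm_nonneg (z₁ - z₂)]
  have hi := hx₂ ⟨0, hℓ⟩
  rw [← h9, hx₁ ⟨0, hℓ⟩] at hi
  linarith
end

section
/- Let a ∈ (0,1] and let x, y, z, w ∈ ℝ^d with x ≠ y, ‖z − x‖ = ‖z − y‖ = ‖x − y‖/(2a), and ⟨w − y, y − z⟩ ≤ 0. Then ⟨w − y, y − x⟩ ≤ √(1 − a²) · ‖w − y‖ · ‖x − y‖. -/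
set_option maxHeartbeats 1000000


open RealInnerProductSpace

/-- Angle estimate from the proof of Lemma 5.1: if `z` is equidistant from `x ≠ y`
at distance `‖x-y‖/(2a)` with `a ∈ (0,1]`, and `⟨w-y, y-z⟩ ≤ 0`, then the cosine of
the angle between `w-y` and `y-x` is at most `√(1-a²)`. -/
theorem stmt_8 (d : ℕ) (a : ℝ) (ha0 : 0 < a) (ha1 : a ≤ 1)
    (x y z w : EuclideanSpace ℝ (Fin d)) (hxy : x ≠ y)
    (hzx : ‖z - x‖ = ‖x - y‖ / (2 * a)) (hzy : ‖z - y‖ = ‖x - y‖ / (2 * a))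
    (hw : ⟪w - y, y - z⟫ ≤ 0) :
    ⟪w - y, y - x⟫ ≤ Real.sqrt (1 - a ^ 2) * ‖w - y‖ * ‖x - y‖ := by
  set v : EuclideanSpace ℝ (Fin d) := y - x with hv
  set u : EuclideanSpace ℝ (Fin d) := w - y with hu
  set p : EuclideanSpace ℝ (Fin d) := (2:ℝ) • z - x - y with hp
  have ha2 : 0 ≤ 1 - a ^ 2 := by nlinarith
  have hxyv : ‖x - y‖ = ‖v‖ := by rw [hv, norm_sub_rev]
  have h1 : v = (z - x) - (z - y) := by rw [hv]; module
  have h2 : p = (z - x) + (z - y) := by rw [hp]; module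
  have orth : ⟪v, p⟫ = 0 := by
    have : ⟪v, p⟫ = ‖z - x‖ ^ 2 - ‖z - y‖ ^ 2 := by
      rw [h1, h2, inner_sub_left, inner_add_right, inner_add_right,
        real_inner_comm (z - y) (z - x), real_inner_self_eq_norm_sq,
        real_inner_self_eq_norm_sq]
      ring
    rw [this, hzx, hzy]; ring
  have hvp : v - p = (2:ℝ) • (y - z) := by rw [hv, hp]; module
  have hV : 0 < ‖v‖ := by
    rw [hv, norm_pos_iff, sub_ne_zero]
    exact fun h => hxy h.symm
  have hVP : a ^ 2 * (‖v‖ ^ 2 + ‖p‖ ^ 2) = ‖v‖ ^ 2 := by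
    have e1 : ‖v - p‖ ^ 2 = ‖v‖ ^ 2 + ‖p‖ ^ 2 := by
      rw [norm_sub_sq_real, orth]; ring
    have e2 : a * ‖v - p‖ = ‖v‖ := by
      rw [hvp, norm_smul]
      simp only [Real.norm_ofNat]
      rw [norm_sub_rev y z, hzy, hxyv]
      field_simp
    nlinarith [e1, e2]
  have hTS : ⟪u, v⟫ ≤ ⟪u, p⟫ := by
    have h3 : ⟪u, v - p⟫ ≤ 0 := by
      rw [hvp, inner_smul_right]; linarith
    rw [inner_sub_right] at h3; linarith
  rw [hxyv]
  rcases le_or_gt ⟪u, v⟫ 0 with hT | hT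
  · have : 0 ≤ Real.sqrt (1 - a ^ 2) * ‖u‖ * ‖v‖ := by positivity
    linarith
  · -- p ≠ 0
    have hP : 0 < ‖p‖ := by
      rcases eq_or_lt_of_le (norm_nonneg p) with h | h
      · exfalso
        have : p = 0 := by rwa [eq_comm, norm_eq_zero] at h
        rw [this, inner_zero_right] at hTS
        linarith
      · exact h
    -- Bessel-type inequality
    set T := ⟪u, v⟫ with hTdef
    set S := ⟪u, p⟫ with hSdef
    have bes : T ^ 2 * ‖p‖ ^ 2 + S ^ 2 * ‖v‖ ^ 2 ≤ ‖u‖ ^ 2 * ‖v‖ ^ 2 * ‖p‖ ^ 2 := by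
      have h0 : (0:ℝ) ≤ ⟪(‖v‖ ^ 2 * ‖p‖ ^ 2) • u - (T * ‖p‖ ^ 2) • v - (S * ‖v‖ ^ 2) • p,
          (‖v‖ ^ 2 * ‖p‖ ^ 2) • u - (T * ‖p‖ ^ 2) • v - (S * ‖v‖ ^ 2) • p⟫ :=
        real_inner_self_nonneg
      simp only [inner_sub_left, inner_sub_right, real_inner_smul_left,
        real_inner_smul_right, real_inner_self_eq_norm_sq, norm_smul,
        Real.norm_eq_abs, mul_pow, sq_abs] at h0
      have c1 : ⟪v, u⟫ = T := (real_inner_comm v u).symm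
      have c2 : ⟪p, u⟫ = S := (real_inner_comm p u).symm
      have c3 : ⟪p, v⟫ = 0 := by rw [real_inner_comm]; exact orth
      rw [← hTdef, ← hSdef, c1, c2, c3, orth] at h0
      nlinarith [h0, mul_pos (mul_pos (mul_pos hV hV) hP) hP]
    have hS2 : T ^ 2 ≤ S ^ 2 := by nlinarith
    have hVP' : a ^ 2 * ‖p‖ ^ 2 = (1 - a ^ 2) * ‖v‖ ^ 2 := by linear_combination hVP
    have e3 : a ^ 2 * ‖p‖ ^ 2 * ‖u‖ ^ 2 = (1 - a ^ 2) * ‖v‖ ^ 2 * ‖u‖ ^ 2 := by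
      linear_combination ‖u‖ ^ 2 * hVP'
    have hT2 : T ^ 2 ≤ (1 - a ^ 2) * ‖u‖ ^ 2 * ‖v‖ ^ 2 := by
      nlinarith [mul_le_mul_of_nonneg_left bes (sq_nonneg a),
        mul_le_mul_of_nonneg_left hS2 (mul_nonneg (sq_nonneg a) (sq_nonneg ‖v‖)),
        e3, hVP', mul_pos hV hV, hV]
    have hsq := Real.sq_sqrt ha2
    have hR : 0 ≤ Real.sqrt (1 - a ^ 2) * ‖u‖ * ‖v‖ := by positivity
    have h4 : T ^ 2 ≤ (Real.sqrt (1 - a ^ 2) * ‖u‖ * ‖v‖) ^ 2 := by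
      have : (Real.sqrt (1 - a ^ 2) * ‖u‖ * ‖v‖) ^ 2
          = (1 - a ^ 2) * ‖u‖ ^ 2 * ‖v‖ ^ 2 := by
        rw [mul_pow, mul_pow, hsq]
      linarith [hT2, this.ge, this.le]
    calc T = Real.sqrt (T ^ 2) := (Real.sqrt_sq hT.le).symm
      _ ≤ Real.sqrt ((Real.sqrt (1 - a ^ 2) * ‖u‖ * ‖v‖) ^ 2) := Real.sqrt_le_sqrt h4
      _ = Real.sqrt (1 - a ^ 2) * ‖u‖ * ‖v‖ := Real.sqrt_sq hR
end

section
/- Let d ≥ 1 and let v_0, …, v_d ∈ ℝ^d be affinely independent points all at distance r > 0 from a point z ∈ ℝ^d. For each i let H_i denote the affine span of {v_j : j ≠ i}. If for every i the Lebesgue volume of the set {w ∈ B(z,r) : w and v_i lie strictly on opposite sides of H_i} is strictly less than half the volume of B(z,r), then z belongs to the convex hull of {v_0, …, v_d}. -/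
open MeasureTheory Metric

/-- A point whose `i`-th barycentric coordinate vanishes lies in the affine span of the
other basis points. -/
lemma aux_mem_facet_span {V : Type*} [NormedAddCommGroup V] [NormedSpace ℝ V]
    {n : ℕ} (b : AffineBasis (Fin (n + 1)) ℝ V) (i : Fin (n + 1)) (p : V)
    (h : b.coord i p = 0) :
    p ∈ affineSpan ℝ (⇑b '' ({i}ᶜ : Set (Fin (n + 1)))) := by
  classical
  set W : Fin (n + 1) → ℝ := fun j => b.coord j p with hW
  set e : {j : Fin (n + 1) // j ∈ ({i}ᶜ : Set (Fin (n + 1)))} ↪ Fin (n + 1) :=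
    Function.Embedding.subtype _ with he
  have hmap : (Finset.univ.map e) = ({i}ᶜ : Finset (Fin (n + 1))) := by
    ext j
    simp [he]
  have hsum_univ : ∑ j, W j = 1 := b.sum_coord_apply_eq_one p
  have hsum_compl : ∑ j ∈ ({i}ᶜ : Finset (Fin (n + 1))), W j = 1 := by
    have h2 := Finset.sum_compl_add_sum ({i} : Finset (Fin (n + 1))) W
    rw [Finset.sum_singleton] at h2
    have : W i = 0 := h
    rw [this, add_zero] at h2
    rw [h2, hsum_univ]
  have hsum_sub : ∑ j, (W ∘ e) j = 1 := by
    rw [← hmap] at hsum_compl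
    rwa [Finset.sum_map] at hsum_compl
  have hind : Set.indicator ↑(Finset.univ.map e) W = W := by
    funext j
    by_cases hj : j = i
    · subst hj
      have : j ∉ (↑(Finset.univ.map e) : Set (Fin (n + 1))) := by
        rw [hmap]; simp
      rw [Set.indicator_of_notMem this]
      exact h.symm
    · have : j ∈ (↑(Finset.univ.map e) : Set (Fin (n + 1))) := by
        rw [hmap]; simp [hj]
      rw [Set.indicator_of_mem this]
  have hcomb : Finset.univ.affineCombination ℝ (⇑b ∘ e) (W ∘ e) = p := by
    rw [← Finset.affineCombination_map]
    rw [Finset.affineCombination_indicator_subset W ⇑b (Finset.subset_univ _)]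
    rw [hind, b.affineCombination_coord_eq_self]
  have hmem := affineCombination_mem_affineSpan (k := ℝ) hsum_sub (⇑b ∘ e)
  rw [hcomb] at hmem
  have hrange : Set.range (⇑b ∘ e) = ⇑b '' ({i}ᶜ : Set (Fin (n + 1))) := by
    rw [Set.range_comp]
    have : Set.range ⇑e = ({i}ᶜ : Set (Fin (n + 1))) := by
      ext x
      simp [he]
    rw [this]
  rwa [hrange] at hmem

/-- If `v 0, …, v d` is a `d`-simplex inscribed in the sphere of radius `r` around `z`
and for each facet hyperplane `H_i` the volume of the cap of `B(z,r)` strictly beyond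
`H_i` (on the side opposite to `v i`) is less than half the ball's volume, then the
circumcenter `z` lies in the simplex. -/
theorem stmt_11 (d : ℕ) (hd : 1 ≤ d) (v : Fin (d + 1) → EuclideanSpace ℝ (Fin d))
    (hv : AffineIndependent ℝ v) (z : EuclideanSpace ℝ (Fin d)) (r : ℝ) (hr : 0 < r)
    (hdist : ∀ i, ‖v i - z‖ = r)
    (hcap : ∀ i, volume {w ∈ closedBall z r |
        (affineSpan ℝ (v '' ({i}ᶜ : Set (Fin (d + 1))))).SOppSide w (v i)} <
      volume (closedBall z r) / 2) :
    z ∈ convexHull ℝ (Set.range v) := by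
  classical
  have htot : affineSpan ℝ (Set.range v) = ⊤ := by
    rw [hv.affineSpan_eq_top_iff_card_eq_finrank_add_one]
    simp [finrank_euclideanSpace_fin]
  let b : AffineBasis (Fin (d + 1)) ℝ (EuclideanSpace ℝ (Fin d)) := ⟨v, hv, htot⟩
  have hbv : ⇑b = v := rfl
  by_contra hz
  rw [← hbv, b.convexHull_eq_nonneg_coord] at hz
  simp only [Set.mem_setOf_eq] at hz
  push_neg at hz
  obtain ⟨i, hi⟩ := hz
  set f : EuclideanSpace ℝ (Fin d) →ᵃ[ℝ] ℝ := b.coord i with hf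
  set H := affineSpan ℝ (v '' ({i}ᶜ : Set (Fin (d + 1)))) with hH
  -- every point of `H` has vanishing `i`-th coordinate
  have hH0 : ∀ x ∈ H, f x = 0 := by
    have hle : H ≤ AffineSubspace.comap f (affineSpan ℝ ({0} : Set ℝ)) := by
      rw [hH, affineSpan_le]
      rintro y ⟨j, hj, rfl⟩
      show f (v j) ∈ affineSpan ℝ ({0} : Set ℝ)
      have : f (v j) = 0 := by
        have hji : j ≠ i := by simpa using hj
        show b.coord i (v j) = 0
        rw [← hbv, b.coord_apply]
        simp [hji.symm]
      rw [this]
      exact mem_affineSpan ℝ rfl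
    intro x hx
    have h1 : x ∈ AffineSubspace.comap f (affineSpan ℝ ({0} : Set ℝ)) := hle hx
    have h0 : f x ∈ (affineSpan ℝ ({0} : Set ℝ) : Set ℝ) := AffineSubspace.mem_comap.mp h1
    rw [AffineSubspace.coe_affineSpan_singleton] at h0
    exact h0
  have hfvi : f (v i) = 1 := by
    show b.coord i (v i) = 1
    rw [← hbv, b.coord_apply]
    simp
  -- negative coordinate means strictly opposite side
  have key : ∀ w : EuclideanSpace ℝ (Fin d), f w < 0 → H.SOppSide w (v i) := by
    intro w hw
    have hne : w ≠ v i := by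
      intro h
      rw [h, hfvi] at hw
      linarith
    have h1 : (0 : ℝ) < 1 - f w := by linarith
    set t : ℝ := (-f w) / (1 - f w) with ht
    have ht0 : 0 < t := div_pos (by linarith) h1
    have ht1 : t < 1 := (div_lt_one h1).2 (by linarith)
    set p := AffineMap.lineMap w (v i) t with hp
    have hsb : Sbtw ℝ w p (v i) := sbtw_lineMap_iff.2 ⟨hne, ht0, ht1⟩
    have hfp : f p = 0 := by
      rw [hp, AffineMap.apply_lineMap, hfvi, AffineMap.lineMap_apply_module, ht]
      field_simp
      simp only [smul_eq_mul]
      rw [show (1 - f w - -f w) = 1 by ring]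
      ring
    have hpH : p ∈ H := by
      rw [hH, ← hbv]
      exact aux_mem_facet_span b i p hfp
    have hwH : w ∉ H := fun hmem => absurd (hH0 w hmem) (ne_of_lt hw)
    exact hsb.sOppSide_of_notMem_of_mem hwH hpH
  -- the half of the ball on `z`'s side of `H` is inside the cap
  set B := closedBall z r with hB
  set U : Set (EuclideanSpace ℝ (Fin d)) := {x | f x < 0} with hU
  have hUopen : IsOpen U := isOpen_lt f.continuous_of_finiteDimensional continuous_const
  have hmeas : MeasurableSet (B ∩ U) :=
    measurableSet_closedBall.inter hUopen.measurableSet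
  set σ : EuclideanSpace ℝ (Fin d) → EuclideanSpace ℝ (Fin d) := fun w => (z + z) - w with hσ
  have hσm : MeasurePreserving σ volume volume :=
    Measure.measurePreserving_sub_left volume (z + z)
  have hfσ : ∀ w, f (σ w) = (f z - f w) + f z := by
    intro w
    have hw : σ w = (z - w) +ᵥ z := by
      simp only [hσ, vadd_eq_add]
      abel
    rw [hw, f.map_vadd]
    have : f.linear (z - w) = f z - f w := f.linearMap_vsub z w
    rw [this]
    rfl
  have hcover : B ⊆ (B ∩ U) ∪ (σ ⁻¹' (B ∩ U)) := by
    intro w hw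
    by_cases hfw : f w < 0
    · exact Or.inl ⟨hw, hfw⟩
    · refine Or.inr ⟨?_, ?_⟩
      · show σ w ∈ closedBall z r
        rw [mem_closedBall, dist_eq_norm]
        have : σ w - z = z - w := by
          simp only [hσ]
          abel
        rw [this, norm_sub_rev]
        rw [mem_closedBall, dist_eq_norm] at hw
        exact hw
      · show f (σ w) < 0
        rw [hfσ w]
        push_neg at hfw
        linarith
  have hhalf : volume B ≤ 2 * volume (B ∩ U) := by
    calc volume B ≤ volume ((B ∩ U) ∪ σ ⁻¹' (B ∩ U)) := measure_mono hcover
      _ ≤ volume (B ∩ U) + volume (σ ⁻¹' (B ∩ U)) := measure_union_le _ _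
      _ = volume (B ∩ U) + volume (B ∩ U) := by rw [hσm.measure_preimage hmeas.nullMeasurableSet]
      _ = 2 * volume (B ∩ U) := (two_mul _).symm
  have hsub : B ∩ U ⊆ {w ∈ closedBall z r | H.SOppSide w (v i)} := by
    rintro w ⟨hwB, hwU⟩
    exact ⟨hwB, key w hwU⟩
  have hlt := hcap i
  rw [← hH] at hlt
  have hchain : volume B < volume B := by
    calc volume B ≤ 2 * volume (B ∩ U) := hhalf
      _ ≤ 2 * volume {w ∈ closedBall z r | H.SOppSide w (v i)} := by
          exact mul_le_mul_right (measure_mono hsub) 2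
      _ < 2 * (volume B / 2) := by
          rw [ENNReal.mul_lt_mul_iff_right (by norm_num) (by norm_num)]
          exact hlt
      _ ≤ volume B := ENNReal.mul_div_le
  exact absurd hchain (lt_irrefl _)
end
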